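/- Let q, k be positive integers, let μ_1,…,μ_q and λ_1,…,λ_k be complex numbers with μ_j ≠ λ_i for all j, i, and let ℓ_j ∈ ℂ^p, r_i ∈ ℂ^m, v_j ∈ ℂ^m, w_i ∈ ℂ^p be as in the Loewner data. Then the Loewner matrix 𝕃 satisfies the Sylvester equation M·𝕃 − 𝕃·Λ = 𝕍·R − L·𝕎, where M = diag(μ_1,…,μ_q), Λ = diag(λ_1,…,λ_k), L is the q×p matrix whose j-th row is ℓ_jᵀ, R is the m×k matrix whose i-th column is r_i, 𝕍 is the q×m matrix whose j-th row is v_jᵀ, and 𝕎 is the p×k matrix whose i-th column is w_i. -/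

import Mathlib

open Matrix Complex

/-- The Loewner matrix `𝕃` satisfies the Sylvester equation
`M·𝕃 − 𝕃·Λ = 𝕍·R − L·𝕎`. -/
theorem loewner_matrix_sylvester
    (q k p m : ℕ) (hq : 0 < q) (hk : 0 < k)
    (μ : Fin q → ℂ) (lam : Fin k → ℂ)
    (hne : ∀ j i, μ j ≠ lam i)
    (l : Fin q → Fin p → ℂ) (r : Fin k → Fin m → ℂ)
    (v : Fin q → Fin m → ℂ) (w : Fin k → Fin p → ℂ)
    (L : Matrix (Fin q) (Fin k) ℂ)
    (hL : ∀ j i, L j i = (v j ⬝ᵥ r i - l j ⬝ᵥ w i) / (μ j - lam i))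
    (M : Matrix (Fin q) (Fin q) ℂ) (hM : M = Matrix.diagonal μ)
    (Λ : Matrix (Fin k) (Fin k) ℂ) (hΛ : Λ = Matrix.diagonal lam)
    (Lmat : Matrix (Fin q) (Fin p) ℂ) (hLmat : ∀ j a, Lmat j a = l j a)
    (R : Matrix (Fin m) (Fin k) ℂ) (hR : ∀ a i, R a i = r i a)
    (V : Matrix (Fin q) (Fin m) ℂ) (hV : ∀ j a, V j a = v j a)
    (W : Matrix (Fin p) (Fin k) ℂ) (hW : ∀ a i, W a i = w i a) :
    M * L - L * Λ = V * R - Lmat * W := by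
  ext j i
  have hd : μ j - lam i ≠ 0 := sub_ne_zero.2 (hne j i)
  simp only [Matrix.sub_apply, Matrix.mul_apply, hM, hΛ]
  rw [Finset.sum_eq_single j (fun b _ hb => by simp [Matrix.diagonal_apply_ne' μ hb])
      (by simp), Finset.sum_eq_single i (fun b _ hb => by simp [Matrix.diagonal_apply_ne lam hb])
      (by simp)]
  simp only [Matrix.diagonal_apply_eq, hL, dotProduct, hV, hR, hLmat, hW]
  field_simp
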